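/- Let L be a Lie algebra over a field K of characteristic ≠ 2, generated by extremal elements x and y with f_x ≡ 0 and f_y ≡ 0 (both sandwiches), and suppose x, y, ⁅x,y⁆ are linearly independent. Then L is isomorphic to the 3-dimensional Heisenberg Lie algebra over K. -/

import Mathlib

theorem two_sandwich_heisenberg {K L : Type*} [Field K] [LieRing L] [LieAlgebra K L]
    (hchar : (2 : K) ≠ 0) (x y : L)
    (hx : ∀ m : L, ⁅x, ⁅x, m⁆⁆ = 0)
    (hy : ∀ m : L, ⁅y, ⁅y, m⁆⁆ = 0)
    (hgen : LieSubalgebra.lieSpan K L {x, y} = ⊤)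
    (hind : LinearIndependent K ![x, y, ⁅x, y⁆]) :
    ∃ b : Module.Basis (Fin 3) K L,
      ⁅b 0, b 1⁆ = b 2 ∧ ⁅b 0, b 2⁆ = 0 ∧ ⁅b 1, b 2⁆ = 0 := by
  set z := ⁅x, y⁆ with hz
  have hxz : ⁅x, z⁆ = 0 := hx y
  have hyz : ⁅y, z⁆ = 0 := by
    have : ⁅y, z⁆ = -⁅y, ⁅y, x⁆⁆ := by rw [hz, ← lie_skew x y, lie_neg]
    rw [this, hy x, neg_zero]
  have hgen9 : ∀ u ∈ ({x, y, z} : Set L), ∀ v ∈ ({x, y, z} : Set L),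
      ⁅u, v⁆ ∈ Submodule.span K ({x, y, z} : Set L) := by
    have hxmem : x ∈ Submodule.span K ({x, y, z} : Set L) :=
      Submodule.subset_span (by simp)
    have hymem : y ∈ Submodule.span K ({x, y, z} : Set L) :=
      Submodule.subset_span (by simp)
    have hzmem : z ∈ Submodule.span K ({x, y, z} : Set L) :=
      Submodule.subset_span (by simp)
    rintro u (rfl | rfl | rfl) v (rfl | rfl | rfl) <;>
      try simp only [lie_self, hxz, hyz]
    all_goals
      first
        | exact Submodule.zero_mem _
        | (rw [hz]; exact hzmem)
        | (rw [← lie_skew]; first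
            | (rw [hz]; exact Submodule.neg_mem _ hzmem)
            | (rw [hxz]; simpa using Submodule.zero_mem _)
            | (rw [hyz]; simpa using Submodule.zero_mem _))
  have key : ∀ u ∈ Submodule.span K ({x, y, z} : Set L),
      ∀ v ∈ Submodule.span K ({x, y, z} : Set L),
      ⁅u, v⁆ ∈ Submodule.span K ({x, y, z} : Set L) := by
    intro u hu
    induction hu using Submodule.span_induction with
    | mem u hu =>
      intro v hv
      induction hv using Submodule.span_induction with
      | mem v hv => exact hgen9 u hu v hv
      | zero => simpa using Submodule.zero_mem _
      | add a b _ _ ha hb => rw [lie_add]; exact Submodule.add_mem _ ha hb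
      | smul c a _ ha => rw [lie_smul]; exact Submodule.smul_mem _ c ha
    | zero => intro v _; simpa using Submodule.zero_mem _
    | add a b _ _ ha hb =>
      intro v hv; rw [add_lie]; exact Submodule.add_mem _ (ha v hv) (hb v hv)
    | smul c a _ ha =>
      intro v hv; rw [smul_lie]; exact Submodule.smul_mem _ c (ha v hv)
  let S : LieSubalgebra K L :=
    { toSubmodule := Submodule.span K ({x, y, z} : Set L)
      lie_mem' := fun {a b} ha hb => key a ha b hb }
  have hStop : Submodule.span K ({x, y, z} : Set L) = ⊤ := by
    have h1 : LieSubalgebra.lieSpan K L {x, y} ≤ S := by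
      apply LieSubalgebra.lieSpan_le.mpr
      rintro w (rfl | rfl) <;> exact Submodule.subset_span (by simp)
    have h2 : (⊤ : LieSubalgebra K L) ≤ S := hgen ▸ h1
    exact top_le_iff.mp fun w _ => h2 (trivial : w ∈ (⊤ : LieSubalgebra K L))
  have hspan : ⊤ ≤ Submodule.span K (Set.range ![x, y, z]) := by
    rw [show Set.range ![x, y, z] = {x, y, z} by
      ext w; simp [Fin.exists_fin_succ, Set.mem_insert_iff, eq_comm]; tauto, hStop]
  let b : Module.Basis (Fin 3) K L := Module.Basis.mk hind hspan
  refine ⟨b, ?_, ?_, ?_⟩ <;>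
    simp only [b, Module.Basis.mk_apply, Matrix.cons_val_zero, Matrix.cons_val_one,
      Matrix.head_cons, Matrix.cons_val_two, Matrix.tail_cons] <;>
    first | rfl | exact hxz | exact hyz
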